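/- arXiv:1001.4283 — 4 statements merged into one kernel-verified Lean document; each statement's English description precedes it below -/
import Mathlib

section
/- Let n be a nonnegative integer. If π is a quasi-partition of 2n (i.e. a sequence of nonnegative integers with π_i ≥ π_{i+2} for all i, summing to 2n) all of whose parts are even, and Φ^C(π) is the sequence obtained from π by replacing each pair of consecutive terms 2s, 2t with s+t, s+t whenever 2s < 2t, then Φ^C(π) is a partition of 2n in which every odd part has even multiplicity. -/
open Finset

/-- Partial sum of the first `k` terms of a sequence of naturals. -/
def psum (π : ℕ → ℕ) (k : ℕ) : ℕ := ∑ i ∈ Finset.range k, π i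

/-- A composition of `n`: almost all terms zero, summing to `n`. -/
def IsComposition (n : ℕ) (π : ℕ → ℕ) : Prop :=
  ∃ N, (∀ i, N ≤ i → π i = 0) ∧ psum π N = n

/-- Dominance order: `l` dominates `π`. -/
def Dominates (l π : ℕ → ℕ) : Prop := ∀ k, psum π k ≤ psum l k

/-- A partition: weakly decreasing sequence. -/
def IsPartition (π : ℕ → ℕ) : Prop := ∀ i, π (i + 1) ≤ π i

/-- A quasi-partition: `π i ≥ π (i+2)` for all `i`. -/
def IsQuasiPartition (π : ℕ → ℕ) : Prop := ∀ i, π (i + 2) ≤ π i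

/-- Interleaving of two sequences: `(ρ₁, σ₁, ρ₂, σ₂, …)` (0-indexed). -/
def interleave (ρ σ : ℕ → ℕ) (i : ℕ) : ℕ :=
  if i % 2 = 0 then ρ (i / 2) else σ (i / 2)

/-- A bipartition of `n`: a pair of partitions whose interleaving sums to `n`. -/
def IsBipartition (n : ℕ) (ρ σ : ℕ → ℕ) : Prop :=
  IsPartition ρ ∧ IsPartition σ ∧ IsComposition n (interleave ρ σ)

/-- Interleaved dominance order on bipartitions: `(ρ;σ) ≤ (μ;ν)`. -/
def BiLE (ρ σ μ ν : ℕ → ℕ) : Prop :=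
  Dominates (interleave μ ν) (interleave ρ σ)

/-- The map `Φ^C` on sequences: replace a consecutive pair `2s < 2t`
by `s+t, s+t` (pointwise description; replacements never overlap for
quasi-partitions). -/
def phiC (π : ℕ → ℕ) : ℕ → ℕ
  | 0 => if π 0 < π 1 then (π 0 + π 1) / 2 else π 0
  | (j + 1) =>
      if π (j + 1) < π (j + 2) then (π (j + 1) + π (j + 2)) / 2
      else if π j < π (j + 1) then (π j + π (j + 1)) / 2
      else π (j + 1)

/-- `Φ^C` of a bipartition: apply `phiC` to the doubled interleaving. -/
def PhiC (ρ σ : ℕ → ℕ) : ℕ → ℕ := phiC (fun i => 2 * interleave ρ σ i)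

/-- Membership in `P^C_{2n}`: partition of `2n` with every odd part of even
multiplicity. -/
def IsPC (n : ℕ) (l : ℕ → ℕ) : Prop :=
  IsPartition l ∧ IsComposition (2 * n) l ∧
    ∀ a : ℕ, Odd a → Even ({i | l i = a}.ncard)

/-- C-distinguished: `μ i ≥ ν i - 1` and `ν i ≥ μ (i+1) - 1`. -/
def QC (μ ν : ℕ → ℕ) : Prop :=
  ∀ i, ν i ≤ μ i + 1 ∧ μ (i + 1) ≤ ν i + 1

/-- B-distinguished: `μ i ≥ ν i - 2` and `ν i ≥ μ (i+1)`. -/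
def QB (μ ν : ℕ → ℕ) : Prop :=
  ∀ i, ν i ≤ μ i + 2 ∧ μ (i + 1) ≤ ν i

/-- Special: `μ i ≥ ν i - 1` and `ν i ≥ μ (i+1)`. -/
def QS (μ ν : ℕ → ℕ) : Prop :=
  ∀ i, ν i ≤ μ i + 1 ∧ μ (i + 1) ≤ ν i

/-- The condition defining `Q_n^{B,2}`: `μ i ≥ ν i - 2`. -/
def QB2 (μ ν : ℕ → ℕ) : Prop := ∀ i, ν i ≤ μ i + 2

/-- For an antitone sequence, the starting index of the run of equal values
containing index `i`. -/
noncomputable def runStart (l : ℕ → ℕ) (i : ℕ) : ℕ := {j | l i < l j}.ncard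

/-- The map `Φ̂^C`, pointwise: halve even parts; replace an (even-length)
maximal run of an odd part `2k+1` with `k, k+1, k, k+1, …`. -/
noncomputable def hphiC (l : ℕ → ℕ) (i : ℕ) : ℕ :=
  if Even (l i) then l i / 2
  else if Even (i - runStart l i) then l i / 2 else l i / 2 + 1

/-- Partial sums of an integer sequence. -/
def zsum (π : ℕ → ℤ) (k : ℕ) : ℤ := ∑ i ∈ Finset.range k, π i

/-- Dominance order on integer sequences. -/
def ZDominates (l π : ℕ → ℤ) : Prop := ∀ k, zsum π k ≤ zsum l k

/-- The interleaved integer sequence `(2ρ₁+1, 2σ₁−1, 2ρ₂+1, 2σ₂−1, …)`. -/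
def interB (ρ σ : ℕ → ℕ) (i : ℕ) : ℤ :=
  if i % 2 = 0 then 2 * (ρ (i / 2) : ℤ) + 1 else 2 * (σ (i / 2) : ℤ) - 1

/-- The map `Φ^B` on integer sequences: replace a consecutive pair `s < t`
by `(s+t)/2, (s+t)/2` (pointwise description). -/
def phiB (π : ℕ → ℤ) : ℕ → ℤ
  | 0 => if π 0 < π 1 then (π 0 + π 1) / 2 else π 0
  | (j + 1) =>
      if π (j + 1) < π (j + 2) then (π (j + 1) + π (j + 2)) / 2
      else if π j < π (j + 1) then (π j + π (j + 1)) / 2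
      else π (j + 1)

/-- `Φ^B` of a bipartition. -/
def PhiB (ρ σ : ℕ → ℕ) : ℕ → ℤ := phiB (interB ρ σ)

/-- Membership in `P^B_{2n+1}` for an integer sequence: nonnegative, weakly
decreasing, summing to `2n+1`, with every (positive) even part of even
multiplicity. -/
def IsPB (n : ℕ) (l : ℕ → ℤ) : Prop :=
  (∀ i, 0 ≤ l i) ∧ (∀ i, l (i + 1) ≤ l i) ∧
  (∃ N, (∀ i, N ≤ i → l i = 0) ∧ zsum l N = 2 * n + 1) ∧
  ∀ a : ℤ, 0 < a → Even a → Even ({i | l i = a}.ncard)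

/-- Membership in `P^B_{2n+1}` for a natural-number partition. -/
def IsPBN (n : ℕ) (l : ℕ → ℕ) : Prop :=
  IsPartition l ∧ IsComposition (2 * n + 1) l ∧
    ∀ a : ℕ, 0 < a → Even a → Even ({i | l i = a}.ncard)

/-- The map `Φ̂^B`, pointwise (0-indexed, so the paper's index `i` is `j+1`):
an odd part `λ_i` becomes `(λ_i + (−1)^i)/2`; a maximal run of an even part
`2k` starting at (0-indexed) position `s` becomes `k, k, …` if `s` is odd
(paper's `i` even) and `k−1, k+1, k−1, k+1, …` if `s` is even (paper's `i`
odd). -/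
noncomputable def hphiB (l : ℕ → ℕ) (j : ℕ) : ℕ :=
  if Odd (l j) then (if Even j then (l j - 1) / 2 else (l j + 1) / 2)
  else
    if Odd (runStart l j) then l j / 2
    else if Even (j - runStart l j) then l j / 2 - 1 else l j / 2 + 1

/-- First component of the special closure `(ρ;σ)°`. -/
def scRho (ρ σ : ℕ → ℕ) : ℕ → ℕ
  | 0 => if ρ 0 + 1 < σ 0 then (ρ 0 + σ 0) / 2 else ρ 0
  | (i + 1) =>
      if ρ (i + 1) + 1 < σ (i + 1) then (ρ (i + 1) + σ (i + 1)) / 2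
      else if σ i < ρ (i + 1) then (σ i + ρ (i + 1)) / 2
      else ρ (i + 1)

/-- Second component of the special closure `(ρ;σ)°`. -/
def scSigma (ρ σ : ℕ → ℕ) (i : ℕ) : ℕ :=
  if ρ i + 1 < σ i then (ρ i + σ i + 1) / 2
  else if σ i < ρ (i + 1) then (σ i + ρ (i + 1) + 1) / 2
  else σ i

/-- First component of the closure `(ρ;σ)~` into `Q_n^{B,2}`. -/
def tRho (ρ σ : ℕ → ℕ) (i : ℕ) : ℕ :=
  if ρ i + 2 < σ i then (ρ i + σ i + 1) / 2 - 1 else ρ i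

/-- Second component of the closure `(ρ;σ)~` into `Q_n^{B,2}`. -/
def tSigma (ρ σ : ℕ → ℕ) (i : ℕ) : ℕ :=
  if ρ i + 2 < σ i then (ρ i + σ i) / 2 + 1 else σ i

/-- First component of the closure `(ρ;σ)^B` into `Q_n^B`. -/
def bRho (ρ σ : ℕ → ℕ) : ℕ → ℕ
  | 0 => if ρ 0 + 2 < σ 0 then (ρ 0 + σ 0 + 1) / 2 - 1 else ρ 0
  | (i + 1) =>
      if ρ (i + 1) + 2 < σ (i + 1) then (ρ (i + 1) + σ (i + 1) + 1) / 2 - 1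
      else if σ i < ρ (i + 1) then (σ i + ρ (i + 1)) / 2
      else ρ (i + 1)

/-- Second component of the closure `(ρ;σ)^B` into `Q_n^B`. -/
def bSigma (ρ σ : ℕ → ℕ) (i : ℕ) : ℕ :=
  if ρ i + 2 < σ i then (ρ i + σ i) / 2 + 1
  else if σ i < ρ (i + 1) then (σ i + ρ (i + 1) + 1) / 2
  else σ i

/-- First component of the closure `(ρ;σ)^C` into `Q_n^C`. -/
def cRho (ρ σ : ℕ → ℕ) : ℕ → ℕ
  | 0 => if ρ 0 + 1 < σ 0 then (ρ 0 + σ 0) / 2 else ρ 0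
  | (i + 1) =>
      if ρ (i + 1) + 1 < σ (i + 1) then (ρ (i + 1) + σ (i + 1)) / 2
      else if σ i + 1 < ρ (i + 1) then (σ i + ρ (i + 1) + 1) / 2
      else ρ (i + 1)

/-- Second component of the closure `(ρ;σ)^C` into `Q_n^C`. -/
def cSigma (ρ σ : ℕ → ℕ) (i : ℕ) : ℕ :=
  if ρ i + 1 < σ i then (ρ i + σ i + 1) / 2
  else if σ i + 1 < ρ (i + 1) then (σ i + ρ (i + 1)) / 2
  else σ i
private lemma quadC (a b c d : ℕ) (hca : c ≤ a) (hdb : d ≤ b)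
    (ea : a % 2 = 0) (eb : b % 2 = 0) (ec : c % 2 = 0) (ed : d % 2 = 0) :
    (if c < d then (c + d) / 2 else if b < c then (b + c) / 2 else c) ≤
      (if b < c then (b + c) / 2 else if a < b then (a + b) / 2 else b) := by
  split_ifs <;> omega

private lemma quadC0 (a b c : ℕ) (hca : c ≤ a)
    (ea : a % 2 = 0) (eb : b % 2 = 0) (ec : c % 2 = 0) :
    (if b < c then (b + c) / 2 else if a < b then (a + b) / 2 else b) ≤
      (if a < b then (a + b) / 2 else a) := by
  split_ifs <;> omega

/-- Correction term for partial sums of `phiC`. -/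
def corr (π : ℕ → ℕ) : ℕ → ℕ
  | 0 => 0
  | (j + 1) => if π j < π (j + 1) then (π (j + 1) - π j) / 2 else 0

/-- If `π` is a quasi-partition of `2n` all of whose parts are
even, then `Φ^C(π)` is a partition of `2n` in which every odd part has even
multiplicity. -/
theorem phiC_mem_PC (n : ℕ) (π : ℕ → ℕ)
    (hq : IsQuasiPartition π) (hc : IsComposition (2 * n) π)
    (hev : ∀ i, Even (π i)) :
    IsPartition (phiC π) ∧ IsComposition (2 * n) (phiC π) ∧
      ∀ a : ℕ, Odd a → Even ({i | phiC π i = a}.ncard) := by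
  obtain ⟨N, hN0, hNs⟩ := hc
  have he : ∀ i, π i % 2 = 0 := fun i => Nat.even_iff.mp (hev i)
  refine ⟨?_, ?_, ?_⟩
  · -- `phiC π` is a partition
    intro i
    cases i with
    | zero =>
      exact quadC0 (π 0) (π 1) (π 2) (hq 0) (he 0) (he 1) (he 2)
    | succ j =>
      exact quadC (π j) (π (j + 1)) (π (j + 2)) (π (j + 3)) (hq j) (hq (j + 1))
        (he j) (he (j + 1)) (he (j + 2)) (he (j + 3))
  · -- `phiC π` is a composition of `2n`
    have hz : ∀ i, N ≤ i → phiC π i = 0 := by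
      intro i hi
      cases i with
      | zero =>
        have h1 := hN0 0 hi
        have h2 := hN0 1 (by omega)
        show (if π 0 < π 1 then (π 0 + π 1) / 2 else π 0) = 0
        rw [if_neg (by omega)]; exact h1
      | succ j =>
        have h1 := hN0 (j + 1) hi
        have h2 := hN0 (j + 2) (by omega)
        show (if π (j + 1) < π (j + 2) then (π (j + 1) + π (j + 2)) / 2
          else if π j < π (j + 1) then (π j + π (j + 1)) / 2 else π (j + 1)) = 0
        rw [if_neg (by omega), if_neg (by omega)]; exact h1
    have key : ∀ k, psum (phiC π) k = psum π k + corr π k := by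
      intro k
      induction k with
      | zero => simp [psum, corr]
      | succ k ih =>
        have hs : ∀ f : ℕ → ℕ, psum f (k + 1) = psum f k + f k :=
          fun f => Finset.sum_range_succ f k
        rw [hs, hs, ih]
        have h : corr π k + phiC π k = π k + corr π (k + 1) := by
          cases k with
          | zero =>
            have e0 := he 0; have e1 := he 1
            show 0 + (if π 0 < π 1 then (π 0 + π 1) / 2 else π 0)
              = π 0 + (if π 0 < π 1 then (π 1 - π 0) / 2 else 0)
            split_ifs <;> omega
          | succ j =>
            have hj := hq j
            have e0 := he j; have e1 := he (j + 1); have e2 := he (j + 2)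
            show (if π j < π (j + 1) then (π (j + 1) - π j) / 2 else 0) +
                (if π (j + 1) < π (j + 2) then (π (j + 1) + π (j + 2)) / 2
                  else if π j < π (j + 1) then (π j + π (j + 1)) / 2 else π (j + 1))
              = π (j + 1) +
                (if π (j + 1) < π (j + 2) then (π (j + 2) - π (j + 1)) / 2 else 0)
            split_ifs <;> omega
        omega
    refine ⟨N, hz, ?_⟩
    have hcN : corr π N = 0 := by
      cases N with
      | zero => rfl
      | succ j =>
        have h1 := hN0 (j + 1) le_rfl
        show (if π j < π (j + 1) then (π (j + 1) - π j) / 2 else 0) = 0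
        rw [if_neg (by omega)]
    rw [key N, hcN, hNs]
    omega
  · -- odd parts have even multiplicity
    intro a ha
    have ha1 : a % 2 = 1 := Nat.odd_iff.mp ha
    set T : Set ℕ := {i | π i < π (i + 1) ∧ (π i + π (i + 1)) / 2 = a} with hT
    have hTfin : T.Finite := by
      apply (Set.finite_Iio N).subset
      rintro i ⟨hlt, -⟩
      simp only [Set.mem_Iio]
      by_contra h
      push_neg at h
      have h1 := hN0 i h
      have h2 := hN0 (i + 1) (by omega)
      omega
    have himg : {i | phiC π i = a} = T ∪ (fun i => i + 1) '' T := by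
      ext i
      simp only [Set.mem_setOf_eq, Set.mem_union, Set.mem_image, hT]
      constructor
      · intro hi
        cases i with
        | zero =>
          have h0 : phiC π 0 = if π 0 < π 1 then (π 0 + π 1) / 2 else π 0 := rfl
          rw [h0] at hi
          by_cases hb : π 0 < π 1
          · rw [if_pos hb] at hi; exact Or.inl ⟨hb, hi⟩
          · rw [if_neg hb] at hi; have := he 0; omega
        | succ j =>
          have h0 : phiC π (j + 1) = if π (j + 1) < π (j + 2) then (π (j + 1) + π (j + 2)) / 2
              else if π j < π (j + 1) then (π j + π (j + 1)) / 2 else π (j + 1) := rfl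
          rw [h0] at hi
          by_cases h1 : π (j + 1) < π (j + 2)
          · rw [if_pos h1] at hi; exact Or.inl ⟨h1, hi⟩
          · rw [if_neg h1] at hi
            by_cases h2 : π j < π (j + 1)
            · rw [if_pos h2] at hi; exact Or.inr ⟨j, ⟨h2, hi⟩, rfl⟩
            · rw [if_neg h2] at hi; have := he (j + 1); omega
      · intro hi
        rcases hi with ⟨hasc, hval⟩ | ⟨t, ⟨hasc, hval⟩, rfl⟩
        · cases i with
          | zero =>
            show (if π 0 < π 1 then (π 0 + π 1) / 2 else π 0) = a
            rw [if_pos hasc]; exact hval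
          | succ j =>
            show (if π (j + 1) < π (j + 2) then (π (j + 1) + π (j + 2)) / 2
              else if π j < π (j + 1) then (π j + π (j + 1)) / 2 else π (j + 1)) = a
            rw [if_pos hasc]; exact hval
        · have hn : ¬ π (t + 1) < π (t + 2) := by have := hq t; omega
          show (if π (t + 1) < π (t + 2) then (π (t + 1) + π (t + 2)) / 2
            else if π t < π (t + 1) then (π t + π (t + 1)) / 2 else π (t + 1)) = a
          rw [if_neg hn, if_pos hasc]; exact hval
    have hdisj : Disjoint T ((fun i => i + 1) '' T) := by
      rw [Set.disjoint_left]
      rintro i hiT ⟨t, htT, rfl⟩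
      have h1 : π (t + 1) < π (t + 1 + 1) := hiT.1
      have h2 : π t < π (t + 1) := htT.1
      have h3 := hq t
      have h4 : π (t + 1 + 1) = π (t + 2) := rfl
      omega
    have hinj : Function.Injective fun i : ℕ => i + 1 := fun x y h => by simpa using h
    rw [himg, Set.ncard_union_eq hdisj hTfin (hTfin.image _),
      Set.ncard_image_of_injective _ hinj]
    exact ⟨T.ncard, rfl⟩
end

section
/- Let (ρ;σ) be a bipartition of n, let π = (2ρ_1, 2σ_1, 2ρ_2, 2σ_2, ...) be the doubled interleaved quasi-partition, and let ξ = Φ^C(ρ;σ) be the partition obtained by replacing each consecutive pair 2s, 2t with s+t, s+t whenever 2s < 2t. Then for any partition λ of 2n, λ dominates π if and only if λ dominates ξ. -/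
open Finset

lemma psum_succ' (f : ℕ → ℕ) (k : ℕ) : psum f (k+1) = psum f k + f k :=
  Finset.sum_range_succ f k

lemma phiC_key (π : ℕ → ℕ) (he : ∀ i, 2 ∣ π i) (hq : ∀ i, π (i+2) ≤ π i) :
    ∀ k, 2 * psum (phiC π) (k+1) =
      if π k < π (k+1) then 2 * psum π k + (π k + π (k+1)) else 2 * psum π (k+1) := by
  intro k
  induction k with
  | zero =>
    have h2 : 2 ∣ (π 0 + π 1) := Nat.dvd_add (he 0) (he 1)
    have h0 : phiC π 0 = if π 0 < π 1 then (π 0 + π 1) / 2 else π 0 := rfl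
    show 2 * psum (phiC π) 1 =
      if π 0 < π 1 then 2 * psum π 0 + (π 0 + π 1) else 2 * psum π 1
    have hs1 : psum (phiC π) 1 = phiC π 0 := by simp [psum]
    have hp1 : psum π 1 = π 0 := by simp [psum]
    have hp0 : psum π 0 = 0 := by simp [psum]
    rw [hs1, h0, hp1, hp0]
    split
    · rw [Nat.mul_div_cancel' h2]; omega
    · ring
  | succ k ih =>
    have h2 : 2 ∣ (π k + π (k+1)) := Nat.dvd_add (he k) (he (k+1))
    have h2' : 2 ∣ (π (k+1) + π (k+2)) := Nat.dvd_add (he (k+1)) (he (k+2))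
    have hstep : phiC π (k+1) =
        if π (k+1) < π (k+2) then (π (k+1) + π (k+2)) / 2
        else if π k < π (k+1) then (π k + π (k+1)) / 2
        else π (k+1) := rfl
    rw [psum_succ', Nat.mul_add, ih, hstep]
    by_cases hA : π (k+1) < π (k+2)
    · have hnB : ¬ π k < π (k+1) := by
        have := hq k; omega
      rw [if_pos hA, if_neg hnB, if_pos hA, Nat.mul_div_cancel' h2']
    · rw [if_neg hA]
      by_cases hB : π k < π (k+1)
      · rw [if_pos hB, if_pos hB, if_neg hA, Nat.mul_div_cancel' h2,
          psum_succ' π (k+1), psum_succ' π k]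
        ring
      · rw [if_neg hB, if_neg hB, if_neg hA, psum_succ' π (k+1)]
        ring

/-- for a bipartition `(ρ;σ)` of `n` with doubled interleaving
`π` and `ξ = Φ^C(ρ;σ)`, a partition `λ` of `2n` dominates `π` iff it
dominates `ξ`. -/
theorem dominates_phiC_iff (n : ℕ) (ρ σ l : ℕ → ℕ)
    (h : IsBipartition n ρ σ)
    (hl : IsPartition l) (hlc : IsComposition (2 * n) l) :
    Dominates l (fun i => 2 * interleave ρ σ i) ↔ Dominates l (PhiC ρ σ) := by
  set π : ℕ → ℕ := fun i => 2 * interleave ρ σ i with hπ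
  have he : ∀ i, 2 ∣ π i := fun i => ⟨interleave ρ σ i, rfl⟩
  have hq : ∀ i, π (i+2) ≤ π i := by
    intro i
    have : interleave ρ σ (i+2) ≤ interleave ρ σ i := by
      unfold interleave
      have hmod : (i+2) % 2 = i % 2 := by omega
      have hdiv : (i+2) / 2 = i / 2 + 1 := by omega
      rw [hmod, hdiv]
      split
      · exact h.1 (i / 2)
      · exact h.2.1 (i / 2)
    simpa [hπ] using Nat.mul_le_mul_left 2 this
  have key := phiC_key π he hq
  have hge : ∀ k, psum π k ≤ psum (PhiC ρ σ) k := by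
    intro k
    match k with
    | 0 => simp [psum]
    | (k+1) =>
      have hk := key k
      have hξ : psum (PhiC ρ σ) (k+1) = psum (phiC π) (k+1) := rfl
      rw [hξ]
      by_cases hB : π k < π (k+1)
      · rw [if_pos hB] at hk
        have : 2 * psum π (k+1) ≤ 2 * psum (phiC π) (k+1) := by
          rw [hk, psum_succ' π k]; omega
        omega
      · rw [if_neg hB] at hk; omega
  constructor
  · intro hdom k
    have hξ : psum (PhiC ρ σ) k = psum (phiC π) k := rfl
    rw [hξ]
    match k with
    | 0 => simp [psum]
    | (k+1) =>
      have hk := key k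
      by_cases hB : π k < π (k+1)
      · rw [if_pos hB] at hk
        have h1 : psum π k ≤ psum l k := hdom k
        have h2 : psum π (k+2) ≤ psum l (k+2) := hdom (k+2)
        have hconc : psum l k + psum l (k+2) ≤ 2 * psum l (k+1) := by
          rw [psum_succ' l (k+1), psum_succ' l k]
          have := hl k; omega
        have hπ2 : psum π (k+2) = psum π k + π k + π (k+1) := by
          rw [psum_succ' π (k+1), psum_succ' π k]
        omega
      · rw [if_neg hB] at hk
        have := hdom (k+1); omega
  · intro hdom k
    exact le_trans (hge k) (hdom k)
end

section
/- Define the map Φ̂^C: P^C_{2n} → Q_n as follows: given λ ∈ P^C_{2n}, halve all even parts, and replace every maximal string of equal odd parts 2k+1, 2k+1, ..., 2k+1 (of even length) with k, k+1, k, k+1, ...; the result is a quasi-partition of n, whose associated bipartition is Φ̂^C(λ). Then Φ̂^C(λ) lies in Q_n^C, i.e. writing Φ̂^C(λ) = (μ;ν), one has μ_i ≥ ν_i - 1 and ν_i ≥ μ_{i+1} - 1 for all i. -/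
open Finset

section Aux

lemma lower_eq_Iio {S : Set ℕ} (hlow : ∀ a b : ℕ, a ≤ b → b ∈ S → a ∈ S)
    (hfin : S.Finite) : S = Set.Iio S.ncard := by
  have hne : ∃ k, k ∉ S := by
    obtain ⟨m, hm⟩ := hfin.bddAbove
    exact ⟨m + 1, fun h => by have := hm h; omega⟩
  classical
  set k := Nat.find hne with hkdef
  have hk : k ∉ S := Nat.find_spec hne
  have hSeq : S = Set.Iio k := by
    ext j
    constructor
    · intro hj
      by_contra hc
      simp only [Set.mem_Iio, not_lt] at hc
      exact hk (hlow _ j hc hj)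
    · intro hj
      simp only [Set.mem_Iio] at hj
      have := Nat.find_min hne hj
      simpa using this
  have hcard : S.ncard = k := by
    rw [hSeq, show Set.Iio k = ↑(Finset.range k) by ext; simp,
      Set.ncard_coe_finset, Finset.card_range]
  rw [← hcard] at hSeq; exact hSeq

lemma hphiC_lb (l : ℕ → ℕ) (i : ℕ) : l i / 2 ≤ hphiC l i := by
  unfold hphiC; split_ifs <;> omega

lemma hphiC_ub (l : ℕ → ℕ) (i : ℕ) : hphiC l i ≤ l i / 2 + 1 := by
  unfold hphiC; split_ifs <;> omega

lemma hphiC_even {l : ℕ → ℕ} {i : ℕ} (h : Even (l i)) : hphiC l i = l i / 2 := by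
  unfold hphiC; rw [if_pos h]

lemma mono_of_partition {l : ℕ → ℕ} (hp : IsPartition l) : ∀ i j : ℕ, i ≤ j → l j ≤ l i :=
  fun _ _ h => antitone_nat_of_succ_le hp h

lemma runStart_le {l : ℕ → ℕ} (hp : IsPartition l) (i : ℕ) : runStart l i ≤ i := by
  have hsub : {j | l i < l j} ⊆ ↑(Finset.range i) := by
    intro j hj
    simp only [Set.mem_setOf_eq] at hj
    simp only [Finset.coe_range, Set.mem_Iio]
    by_contra hc
    push_neg at hc
    exact absurd (mono_of_partition hp i j hc) (by omega)
  calc runStart l i ≤ (↑(Finset.range i) : Set ℕ).ncard :=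
        Set.ncard_le_ncard hsub (Finset.range i).finite_toSet
    _ = i := by rw [Set.ncard_coe_finset, Finset.card_range]

lemma run_structure {l : ℕ → ℕ} (hp : IsPartition l) {N : ℕ}
    (hN : ∀ i, N ≤ i → l i = 0) {a : ℕ} (ha : 0 < a) :
    ∃ s t : ℕ, s ≤ t ∧ {j | l j = a} = Set.Ico s t ∧ ∀ i, l i = a → runStart l i = s := by
  have hmono := mono_of_partition hp
  have hgtfin : {j | a < l j}.Finite := by
    apply Set.Finite.subset (Set.finite_Iio N)
    intro j hj
    simp only [Set.mem_setOf_eq] at hj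
    simp only [Set.mem_Iio]
    by_contra hc
    push_neg at hc
    have := hN j hc
    omega
  have hgefin : {j | a ≤ l j}.Finite := by
    apply Set.Finite.subset (Set.finite_Iio N)
    intro j hj
    simp only [Set.mem_setOf_eq] at hj
    simp only [Set.mem_Iio]
    by_contra hc
    push_neg at hc
    have := hN j hc
    omega
  have hgtlow : ∀ b c : ℕ, b ≤ c → c ∈ {j | a < l j} → b ∈ {j | a < l j} := by
    intro b c hbc hc
    simp only [Set.mem_setOf_eq] at hc ⊢
    exact lt_of_lt_of_le hc (hmono b c hbc)
  have hgelow : ∀ b c : ℕ, b ≤ c → c ∈ {j | a ≤ l j} → b ∈ {j | a ≤ l j} := by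
    intro b c hbc hc
    simp only [Set.mem_setOf_eq] at hc ⊢
    exact le_trans hc (hmono b c hbc)
  have heqgt := lower_eq_Iio hgtlow hgtfin
  have heqge := lower_eq_Iio hgelow hgefin
  refine ⟨{j | a < l j}.ncard, {j | a ≤ l j}.ncard, ?_, ?_, ?_⟩
  · by_contra hc
    push_neg at hc
    have hmem : {j | a ≤ l j}.ncard ∈ Set.Iio {j | a < l j}.ncard := Set.mem_Iio.mpr hc
    rw [← heqgt] at hmem
    simp only [Set.mem_setOf_eq] at hmem
    have h2 : {j | a ≤ l j}.ncard ∈ {j | a ≤ l j} := le_of_lt hmem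
    have h3 := heqge.subset h2
    simp only [Set.mem_Iio] at h3
    omega
  · ext j
    simp only [Set.mem_setOf_eq, Set.mem_Ico]
    constructor
    · intro hj
      constructor
      · by_contra hc
        push_neg at hc
        have : j ∈ Set.Iio {j | a < l j}.ncard := Set.mem_Iio.mpr hc
        rw [← heqgt] at this
        simp only [Set.mem_setOf_eq] at this
        omega
      · have : j ∈ {j | a ≤ l j} := by simp [Set.mem_setOf_eq, hj]
        rw [heqge] at this
        simpa using this
    · intro ⟨h1, h2⟩
      have hge : a ≤ l j := by
        have : j ∈ Set.Iio {j | a ≤ l j}.ncard := Set.mem_Iio.mpr h2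
        rw [← heqge] at this; exact this
      have hngt : ¬ a < l j := by
        intro hgt
        have : j ∈ {j | a < l j} := hgt
        rw [heqgt] at this
        simp only [Set.mem_Iio] at this
        omega
      omega
  · intro i hi
    unfold runStart
    rw [hi]


lemma alt_sum (c : ℕ) :
    ∑ i ∈ Finset.range (2 * c), (if Even i then (-1 : ℤ) else 1) = 0 := by
  induction c with
  | zero => simp
  | succ c ih =>
    rw [show 2 * (c + 1) = (2 * c) + 1 + 1 by ring, Finset.sum_range_succ,
      Finset.sum_range_succ, ih]
    have h1 : Even (2 * c) := even_two_mul c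
    have h2 : ¬ Even (2 * c + 1) := by simp [Nat.even_add_one, h1]
    rw [if_pos h1, if_neg h2]
    ring

lemma sum_hphiC {n : ℕ} {l : ℕ → ℕ} (h : IsPC n l) {N : ℕ}
    (hN : ∀ i, N ≤ i → l i = 0) (hs : psum l N = 2 * n) : psum (hphiC l) N = n := by
  obtain ⟨hp, -, hmult⟩ := h
  have key : ∑ i ∈ Finset.range N, ((2 * hphiC l i : ℤ) - (l i : ℤ)) = 0 := by
    rw [← Finset.sum_fiberwise_of_maps_to
      (fun x hx => Finset.mem_image_of_mem l hx)
      (fun i => (2 * hphiC l i : ℤ) - (l i : ℤ))]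
    apply Finset.sum_eq_zero
    intro a ha
    by_cases hev : Even a
    · apply Finset.sum_eq_zero
      intro i hi
      simp only [Finset.mem_filter] at hi
      have hia : l i = a := hi.2
      have : hphiC l i = l i / 2 := hphiC_even (hia ▸ hev)
      rw [this]
      obtain ⟨k, hk⟩ := hev
      rw [hia]
      push_cast
      omega
    · have hodd : Odd a := Nat.not_even_iff_odd.mp hev
      have ha0 : 0 < a := Nat.pos_of_ne_zero (by rintro rfl; exact hev Even.zero)
      obtain ⟨s, t, hst, hset, hrs⟩ := run_structure hp hN ha0
      have hfil : (Finset.range N).filter (fun i => l i = a) = Finset.Ico s t := by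
        ext i
        simp only [Finset.mem_filter, Finset.mem_range, Finset.mem_Ico]
        constructor
        · intro ⟨_, hia⟩
          have : i ∈ Set.Ico s t := hset ▸ hia
          exact this
        · intro hi
          have h1 : i ∈ {j | l j = a} := by rw [hset]; exact hi
          simp only [Set.mem_setOf_eq] at h1
          refine ⟨?_, h1⟩
          by_contra hc
          push_neg at hc
          have := hN i hc
          omega
      rw [hfil]
      have heach : ∀ i ∈ Finset.Ico s t,
          ((2 * hphiC l i : ℤ) - (l i : ℤ)) = (if Even (i - s) then (-1 : ℤ) else 1) := by
        intro i hi
        simp only [Finset.mem_Ico] at hi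
        have hia : l i = a := by
          have : i ∈ {j | l j = a} := by rw [hset]; exact Set.mem_Ico.mpr hi
          exact this
        have hrsi : runStart l i = s := hrs i hia
        have hnev : ¬ Even (l i) := by rw [hia]; exact hev
        have hval : hphiC l i =
            if Even (i - runStart l i) then l i / 2 else l i / 2 + 1 := by
          unfold hphiC
          rw [if_neg hnev]
        rw [hval, hrsi, hia]
        obtain ⟨k, hk⟩ := hodd
        by_cases hpar : Even (i - s)
        · rw [if_pos hpar, if_pos hpar]
          push_cast
          omega
        · rw [if_neg hpar, if_neg hpar]
          push_cast
          omega
      rw [Finset.sum_congr rfl heach, Finset.sum_Ico_eq_sum_range]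
      have hred : ∀ i ∈ Finset.range (t - s),
          (if Even (s + i - s) then (-1 : ℤ) else 1) = (if Even i then (-1 : ℤ) else 1) := by
        intro i _
        have : s + i - s = i := by omega
        rw [this]
      rw [Finset.sum_congr rfl hred]
      have hevlen : Even (t - s) := by
        have := hmult a hodd
        rw [hset] at this
        have hico : (Set.Ico s t).ncard = t - s := by
          rw [show Set.Ico s t = ↑(Finset.Ico s t) by ext; simp, Set.ncard_coe_finset,
            Nat.card_Ico]
        rw [hico] at this
        exact this
      obtain ⟨c, hc⟩ := hevlen
      rw [show t - s = 2 * c by omega]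
      exact alt_sum c
  have hsplit : ∑ i ∈ Finset.range N, ((2 * hphiC l i : ℤ) - (l i : ℤ))
      = 2 * (psum (hphiC l) N : ℤ) - (psum l N : ℤ) := by
    rw [Finset.sum_sub_distrib]
    unfold psum
    push_cast
    rw [Finset.mul_sum]
  rw [hsplit] at key
  rw [hs] at key
  have : 2 * psum (hphiC l) N = 2 * n := by exact_mod_cast by omega
  omega

end Aux

/-- for `λ ∈ P^C_{2n}`, `Φ̂^C(λ)` is a quasi-partition of `n`
whose associated bipartition is C-distinguished. -/
theorem hphiC_mem_QC (n : ℕ) (l : ℕ → ℕ) (h : IsPC n l) :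
    IsQuasiPartition (hphiC l) ∧ IsComposition n (hphiC l) ∧
      QC (fun j => hphiC l (2 * j)) (fun j => hphiC l (2 * j + 1)) := by
  obtain ⟨hp, ⟨N, hN0, hNsum⟩, hmult⟩ := h
  have hmono := mono_of_partition hp
  refine ⟨?_, ?_, ?_⟩
  · -- quasi-partition
    intro i
    have h1 : l (i + 2) ≤ l i := hmono i (i + 2) (by omega)
    have lb := hphiC_lb l i
    have ub := hphiC_ub l (i + 2)
    rcases eq_or_lt_of_le h1 with h2 | h2
    · -- equal values
      by_cases hev : Even (l i)
      · rw [hphiC_even hev, hphiC_even (h2.symm ▸ hev)]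
        omega
      · have hnev2 : ¬ Even (l (i + 2)) := by rw [h2]; exact hev
        have hrseq : runStart l (i + 2) = runStart l i := by
          unfold runStart; rw [h2]
        have hsle := runStart_le hp i
        have hpar : Even (i + 2 - runStart l i) ↔ Even (i - runStart l i) := by
          rw [show i + 2 - runStart l i = (i - runStart l i) + 2 from by omega]
          simp [Nat.even_add]
        have e2 : hphiC l (i + 2) =
            if Even (i - runStart l i) then l (i + 2) / 2 else l (i + 2) / 2 + 1 := by
          unfold hphiC
          rw [if_neg hnev2, hrseq, if_congr hpar rfl rfl]
        have e1 : hphiC l i =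
            if Even (i - runStart l i) then l i / 2 else l i / 2 + 1 := by
          unfold hphiC
          rw [if_neg hev]
        rw [e1, e2]
        split_ifs <;> omega
    · -- strictly smaller
      by_cases hev : Even (l (i + 2))
      · rw [hphiC_even hev]
        omega
      · have hm2 : l (i + 2) % 2 = 1 := Nat.odd_iff.mp (Nat.not_even_iff_odd.mp hev)
        rcases Nat.lt_or_ge (l (i + 2) + 1) (l i) with h3 | h3
        · omega
        · have hli : l i = l (i + 2) + 1 := by omega
          have hevi : Even (l i) := by
            rw [hli, Nat.even_iff]
            omega
          rw [hphiC_even hevi]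
          omega
  · -- composition
    refine ⟨N, fun i hi => ?_, ?_⟩
    · have h0 := hN0 i hi
      rw [hphiC_even (by rw [h0]; exact Even.zero), h0]
    · exact sum_hphiC ⟨hp, ⟨N, hN0, hNsum⟩, hmult⟩ hN0 hNsum
  · -- QC
    have step : ∀ j, hphiC l (j + 1) ≤ hphiC l j + 1 := by
      intro j
      have u := hphiC_ub l (j + 1)
      have d := hphiC_lb l j
      have hle := hp j
      omega
    intro i
    refine ⟨step (2 * i), ?_⟩
    simpa [show 2 * (i + 1) = (2 * i + 1) + 1 from by ring] using step (2 * i + 1)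
end

section
/- For any bipartition (ρ;σ) of n, one has (ρ;σ) ≤ Φ̂^C(Φ^C(ρ;σ)) in the interleaved dominance order, with equality if and only if (ρ;σ) is C-distinguished, i.e. (ρ;σ) ∈ Q_n^C. -/
open Finset

namespace Aux

def LL (π : ℕ → ℕ) : ℕ → ℕ := phiC (fun i => 2 * π i)

lemma LL_zero (π : ℕ → ℕ) :
    LL π 0 = if π 0 < π 1 then π 0 + π 1 else 2 * π 0 := by
  simp only [LL, phiC]
  split_ifs <;> omega

lemma LL_succ (π : ℕ → ℕ) (j : ℕ) :
    LL π (j+1) = if π (j+1) < π (j+2) then π (j+1) + π (j+2)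
      else if π j < π (j+1) then π j + π (j+1) else 2 * π (j+1) := by
  simp only [LL, phiC]
  split_ifs <;> omega

lemma L_flat0 (π : ℕ → ℕ) (h : ¬ π 0 < π 1) : LL π 0 = 2 * π 0 := by
  rw [LL_zero, if_neg h]

lemma L_flatS (π : ℕ → ℕ) {j : ℕ} (h1 : ¬ π (j+1) < π (j+2))
    (h2 : ¬ π j < π (j+1)) : LL π (j+1) = 2 * π (j+1) := by
  rw [LL_succ, if_neg h1, if_neg h2]

lemma L_asc (π : ℕ → ℕ) (hq : ∀ j, π (j+2) ≤ π j) {j : ℕ} (h : π j < π (j+1)) :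
    LL π j = π j + π (j+1) ∧ LL π (j+1) = π j + π (j+1) := by
  constructor
  · cases j with
    | zero => rw [LL_zero, if_pos h]
    | succ k => rw [LL_succ, if_pos h]
  · have := hq j
    rw [LL_succ, if_neg (by omega), if_pos h]

lemma L_anti (π : ℕ → ℕ) (hq : ∀ j, π (j+2) ≤ π j) (j : ℕ) :
    LL π (j+1) ≤ LL π j := by
  cases j with
  | zero =>
    have h0 : π 2 ≤ π 0 := hq 0
    have h1 : π 3 ≤ π 1 := hq 1
    have hs : LL π 1 = if π 1 < π 2 then π 1 + π 2
        else if π 0 < π 1 then π 0 + π 1 else 2 * π 1 := LL_succ π 0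
    show LL π 1 ≤ LL π 0
    rw [hs, LL_zero]
    split_ifs <;> omega
  | succ k =>
    have h0 : π (k+2) ≤ π k := hq k
    have h1 : π (k+3) ≤ π (k+1) := hq (k+1)
    have h2 : π (k+4) ≤ π (k+2) := hq (k+2)
    have hs1 : LL π (k+1) = if π (k+1) < π (k+2) then π (k+1) + π (k+2)
        else if π k < π (k+1) then π k + π (k+1) else 2 * π (k+1) := LL_succ π k
    have hs2 : LL π (k+2) = if π (k+2) < π (k+3) then π (k+2) + π (k+3)
        else if π (k+1) < π (k+2) then π (k+1) + π (k+2) else 2 * π (k+2) :=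
      LL_succ π (k+1)
    show LL π (k+2) ≤ LL π (k+1)
    rw [hs1, hs2]
    split_ifs <;> omega

lemma L_anti' (π : ℕ → ℕ) (hq : ∀ j, π (j+2) ≤ π j) :
    ∀ a b : ℕ, a ≤ b → LL π b ≤ LL π a :=
  fun _ _ hab => antitone_nat_of_succ_le (L_anti π hq) hab

lemma L_odd_cases (π : ℕ → ℕ) {i : ℕ} (ho : Odd (LL π i)) :
    (π i < π (i+1)) ∨ ∃ k, i = k + 1 ∧ π k < π (k+1) := by
  cases i with
  | zero =>
    by_cases h : π 0 < π 1
    · exact Or.inl h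
    · exfalso
      rw [L_flat0 π h, Nat.odd_iff] at ho
      omega
  | succ k =>
    by_cases h1 : π (k+1) < π (k+2)
    · exact Or.inl h1
    · by_cases h2 : π k < π (k+1)
      · exact Or.inr ⟨k, rfl, h2⟩
      · exfalso
        rw [L_flatS π h1 h2, Nat.odd_iff] at ho
        omega

lemma runStart_eq (l : ℕ → ℕ) (hl : ∀ a b : ℕ, a ≤ b → l b ≤ l a) (i r : ℕ)
    (hri : r ≤ i) (hr : l r = l i) (hmin : ∀ j, j < r → l j ≠ l i) :
    runStart l i = r := by
  have hset : {j | l i < l j} = ↑(Finset.range r) := by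
    ext j
    simp only [Set.mem_setOf_eq, Finset.coe_range, Set.mem_Iio]
    constructor
    · intro hj
      by_contra hcon
      push_neg at hcon
      have := hl r j hcon
      omega
    · intro hj
      have ha := hl j i (by omega)
      have hb := hmin j hj
      omega
  rw [runStart, hset, Set.ncard_coe_finset, Finset.card_range]

lemma parity (π : ℕ → ℕ) (hq : ∀ j, π (j+2) ≤ π j) :
    ∀ i, Odd (LL π i) → ((π i < π (i+1)) ↔ Even (i - runStart (LL π) i)) := by
  have hl := L_anti' π hq
  intro i
  induction i with
  | zero =>
    intro ho
    have hr : runStart (LL π) 0 = 0 :=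
      runStart_eq _ hl 0 0 le_rfl rfl (fun j hj => absurd hj (by omega))
    have hA : π 0 < π 1 := by
      rcases L_odd_cases π ho with h | ⟨k, hk, _⟩
      · exact h
      · omega
    rw [hr]
    exact iff_of_true hA Even.zero
  | succ i ih =>
    intro ho
    have hex : ∃ r, LL π r = LL π (i+1) := ⟨i+1, rfl⟩
    have hfr : LL π (Nat.find hex) = LL π (i+1) := Nat.find_spec hex
    have hmin : ∀ j, j < Nat.find hex → LL π j ≠ LL π (i+1) :=
      fun j hj => Nat.find_min hex hj
    have hri : Nat.find hex ≤ i + 1 := Nat.find_le rfl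
    set r := Nat.find hex with hrdef
    have hrs : runStart (LL π) (i+1) = r := runStart_eq _ hl (i+1) r hri hfr hmin
    rw [hrs]
    by_cases hc : r = i + 1
    · have hA : π (i+1) < π (i+2) := by
        rcases L_odd_cases π ho with h | ⟨k, hk, hAk⟩
        · exact h
        · exfalso
          have hk' : k = i := by omega
          rw [hk'] at hAk
          have h1 := (L_asc π hq hAk).1
          have h2 := (L_asc π hq hAk).2
          exact hmin i (by omega) (by rw [h1, ← h2])
      rw [hc]
      exact iff_of_true hA ⟨0, by omega⟩
    · have hri' : r ≤ i := by omega
      have hle1 := hl i (i+1) (by omega)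
      have hle2 := hl r i hri'
      have hli : LL π i = LL π (i+1) := by omega
      have hoi : Odd (LL π i) := by rw [hli]; exact ho
      have hrs' : runStart (LL π) i = r :=
        runStart_eq _ hl i r hri' (by rw [hfr, hli])
          (fun j hj => by rw [hli]; exact hmin j hj)
      have hiff := ih hoi
      rw [hrs'] at hiff
      by_cases hAi : π i < π (i+1)
      · have hnA : ¬ π (i+1) < π (i+2) := by have := hq i; omega
        have hev : Even (i - r) := hiff.mp hAi
        have hne : ¬ Even (i + 1 - r) := by
          rw [Nat.even_iff] at hev ⊢; omega
        exact iff_of_false hnA hne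
      · have hodd : ¬ Even (i - r) := fun hh => hAi (hiff.mpr hh)
        have hA1 : π (i+1) < π (i+2) := by
          rcases L_odd_cases π ho with h | ⟨k, hk, hAk⟩
          · exact h
          · have hk' : k = i := by omega
            rw [hk'] at hAk
            exact absurd hAk hAi
        have hev : Even (i + 1 - r) := by
          rw [Nat.even_iff] at hodd ⊢; omega
        exact iff_of_true hA1 hev

lemma M_asc (π : ℕ → ℕ) (hq : ∀ j, π (j+2) ≤ π j) {i : ℕ} (h : π i < π (i+1)) :
    hphiC (LL π) i = (π i + π (i+1)) / 2 := by
  have hv := (L_asc π hq h).1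
  simp only [hphiC]
  by_cases he : Even (LL π i)
  · rw [if_pos he, hv]
  · rw [if_neg he,
      if_pos ((parity π hq i (Nat.not_even_iff_odd.mp he)).mp h), hv]

lemma M_desc (π : ℕ → ℕ) (hq : ∀ j, π (j+2) ≤ π j) {i : ℕ} (h : π i < π (i+1)) :
    hphiC (LL π) (i+1) = (π i + π (i+1) + 1) / 2 := by
  have hv := (L_asc π hq h).2
  simp only [hphiC]
  by_cases he : Even (LL π (i+1))
  · rw [if_pos he, hv]
    rw [hv, Nat.even_iff] at he
    omega
  · have hAn : ¬ π (i+1) < π (i+2) := by have := hq i; omega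
    have hne : ¬ Even ((i+1) - runStart (LL π) (i+1)) :=
      fun hh => hAn ((parity π hq (i+1) (Nat.not_even_iff_odd.mp he)).mpr hh)
    rw [if_neg he, if_neg hne, hv]
    rw [hv, Nat.even_iff] at he
    omega

lemma M_flat0 (π : ℕ → ℕ) (h : ¬ π 0 < π 1) : hphiC (LL π) 0 = π 0 := by
  simp only [hphiC]
  rw [L_flat0 π h, if_pos ⟨π 0, by ring⟩]
  omega

lemma M_flatS (π : ℕ → ℕ) {j : ℕ} (h1 : ¬ π (j+1) < π (j+2))
    (h2 : ¬ π j < π (j+1)) : hphiC (LL π) (j+1) = π (j+1) := by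
  simp only [hphiC]
  rw [L_flatS π h1 h2, if_pos ⟨π (j+1), by ring⟩]
  omega

def dd (π : ℕ → ℕ) : ℕ → ℕ
  | 0 => 0
  | (j+1) => if π j < π (j+1) then (π j + π (j+1)) / 2 - π j else 0

lemma psum_succ (f : ℕ → ℕ) (k : ℕ) : psum f (k+1) = psum f k + f k := by
  simp [psum, Finset.sum_range_succ]

lemma psum_M (π : ℕ → ℕ) (hq : ∀ j, π (j+2) ≤ π j) :
    ∀ k, psum (hphiC (LL π)) k = psum π k + dd π k := by
  intro k
  induction k with
  | zero => simp [psum, dd]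
  | succ k ih =>
    have hd : ∀ m : ℕ, dd π (m+1) =
        if π m < π (m+1) then (π m + π (m+1)) / 2 - π m else 0 := fun m => rfl
    rw [psum_succ, psum_succ, ih, hd]
    by_cases hAk : π k < π (k+1)
    · have hM := M_asc π hq hAk
      rw [hM, if_pos hAk]
      have hdk : dd π k = 0 := by
        cases k with
        | zero => rfl
        | succ j =>
          have hqj : π (j+2) ≤ π j := hq j
          have hAk' : π (j+1) < π (j+2) := hAk
          rw [hd j, if_neg (by omega)]
      rw [hdk]
      omega
    · rw [if_neg hAk]
      cases k with
      | zero =>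
        rw [M_flat0 π hAk]
        have hd0 : dd π 0 = 0 := rfl
        omega
      | succ j =>
        by_cases hAj : π j < π (j+1)
        · have hM : hphiC (LL π) (j+1) = (π j + π (j+1) + 1) / 2 :=
            M_desc π hq hAj
          rw [hM, hd j, if_pos hAj]
          omega
        · have hAk' : ¬ π (j+1) < π (j+2) := hAk
          rw [M_flatS π hAk' hAj, hd j, if_neg hAj]
          omega

lemma eq_iff (π : ℕ → ℕ) (hq : ∀ j, π (j+2) ≤ π j) :
    (∀ i, π i = hphiC (LL π) i) ↔ (∀ j, π (j+1) ≤ π j + 1) := by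
  constructor
  · intro h j
    by_cases hA : π j < π (j+1)
    · have hM := M_asc π hq hA
      have hj := h j
      rw [hM] at hj
      omega
    · omega
  · intro h i
    cases i with
    | zero =>
      by_cases hA : π 0 < π 1
      · have hM : hphiC (LL π) 0 = (π 0 + π 1) / 2 := M_asc π hq hA
        have h0 : π 1 ≤ π 0 + 1 := h 0
        rw [hM]
        omega
      · rw [M_flat0 π hA]
    | succ j =>
      by_cases hA : π (j+1) < π (j+2)
      · have hM : hphiC (LL π) (j+1) = (π (j+1) + π (j+2)) / 2 := M_asc π hq hA
        have h1 : π (j+2) ≤ π (j+1) + 1 := h (j+1)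
        rw [hM]
        omega
      · by_cases hAj : π j < π (j+1)
        · have hM : hphiC (LL π) (j+1) = (π j + π (j+1) + 1) / 2 :=
            M_desc π hq hAj
          have h0 : π (j+1) ≤ π j + 1 := h j
          rw [hM]
          omega
        · rw [M_flatS π hA hAj]

lemma il_even (ρ σ : ℕ → ℕ) (m : ℕ) : interleave ρ σ (2*m) = ρ m := by
  unfold interleave
  rw [if_pos (Nat.mul_mod_right 2 m)]
  congr 1
  omega

lemma il_odd (ρ σ : ℕ → ℕ) (m : ℕ) : interleave ρ σ (2*m+1) = σ m := by
  unfold interleave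
  rw [if_neg (by omega)]
  congr 1
  omega

end Aux

/-- `(ρ;σ) ≤ Φ̂^C(Φ^C(ρ;σ))`, with equality iff `(ρ;σ)` is
C-distinguished. -/
theorem le_hphiC_phiC (n : ℕ) (ρ σ : ℕ → ℕ) (h : IsBipartition n ρ σ) :
    Dominates (hphiC (PhiC ρ σ)) (interleave ρ σ) ∧
      ((∀ i, interleave ρ σ i = hphiC (PhiC ρ σ) i) ↔ QC ρ σ) := by
  obtain ⟨hρ, hσ, -⟩ := h
  have hq : ∀ j, interleave ρ σ (j+2) ≤ interleave ρ σ j := by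
    intro j
    rcases Nat.even_or_odd j with ⟨m, rfl⟩ | ⟨m, rfl⟩
    · rw [show m + m + 2 = 2*(m+1) from by ring, show m + m = 2*m from by ring,
        Aux.il_even, Aux.il_even]
      exact hρ m
    · rw [show 2*m+1+2 = 2*(m+1)+1 from by ring, Aux.il_odd, Aux.il_odd]
      exact hσ m
  have hP : PhiC ρ σ = Aux.LL (interleave ρ σ) := rfl
  constructor
  · intro k
    rw [hP, Aux.psum_M _ hq k]
    exact Nat.le_add_right _ _
  · rw [hP, Aux.eq_iff _ hq]
    constructor
    · intro hh i
      have e1 : interleave ρ σ (2*i) = ρ i := Aux.il_even ρ σ i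
      have e2 : interleave ρ σ (2*i+1) = σ i := Aux.il_odd ρ σ i
      have e3 : interleave ρ σ (2*i+1+1) = ρ (i+1) := by
        rw [show 2*i+1+1 = 2*(i+1) from by ring, Aux.il_even]
      have h1 := hh (2*i)
      have h2 := hh (2*i+1)
      rw [e1, e2] at h1
      rw [e2, e3] at h2
      exact ⟨h1, h2⟩
    · intro hh j
      rcases Nat.even_or_odd j with ⟨m, rfl⟩ | ⟨m, rfl⟩
      · rw [show m + m + 1 = 2*m+1 from by ring, show m + m = 2*m from by ring,
          Aux.il_odd, Aux.il_even]
        exact (hh m).1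
      · rw [show 2*m+1+1 = 2*(m+1) from by ring, Aux.il_even, Aux.il_odd]
        exact (hh m).2
end
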